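/- A continuous curve γ: ℝ → M is partially future imprisoned in some compact set (i.e., there exists a compact C such that for every t there is t' > t with γ(t') ∈ C) if and only if Ω_f(γ) is nonempty, provided M is a locally compact Hausdorff space. -/

import Mathlib

open Set

theorem partially_imprisoned_iff_omegaLimit_nonempty {M : Type*} [TopologicalSpace M]
    [T2Space M] [LocallyCompactSpace M] (γ : ℝ → M) (hγ : Continuous γ) :
    (∃ C : Set M, IsCompact C ∧ ∀ t : ℝ, ∃ t' > t, γ t' ∈ C) ↔
      (⋂ t : ℝ, closure (γ '' Ici t)).Nonempty := by
  constructor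
  · rintro ⟨C, hC, himp⟩
    set K : ℝ → Set M := fun t => C ∩ closure (γ '' Ici t) with hK
    have hne : ∀ t, (K t).Nonempty := by
      intro t
      obtain ⟨t', ht', hmem⟩ := himp t
      exact ⟨γ t', hmem, subset_closure ⟨t', le_of_lt ht', rfl⟩⟩
    have hanti : Antitone K := by
      intro s t hst
      exact inter_subset_inter_right _ (closure_mono (image_mono (Ici_subset_Ici.2 hst)))
    have hdir : Directed (· ⊇ ·) K := by
      intro s t
      exact ⟨max s t, hanti (le_max_left s t), hanti (le_max_right s t)⟩
    have hcompact : ∀ t, IsCompact (K t) := fun t => hC.inter_right isClosed_closure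
    have hclosed : ∀ t, IsClosed (K t) := fun t =>
      (hC.isClosed).inter isClosed_closure
    obtain ⟨x, hx⟩ := IsCompact.nonempty_iInter_of_directed_nonempty_isCompact_isClosed
      K hdir hne hcompact hclosed
    exact ⟨x, mem_iInter.2 fun t => (mem_iInter.1 hx t).2⟩
  · rintro ⟨x, hx⟩
    obtain ⟨C, hC, hCn⟩ := exists_compact_mem_nhds x
    refine ⟨C, hC, fun t => ?_⟩
    have hx' : x ∈ closure (γ '' Ici (t + 1)) := mem_iInter.1 hx (t + 1)
    obtain ⟨y, hyC, hyim⟩ := (mem_closure_iff_nhds.1 hx') C hCn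
    obtain ⟨t', ht', rfl⟩ := hyim
    exact ⟨t', lt_of_lt_of_le (lt_add_one t) ht', hyC⟩
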